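/- Under the hypotheses on W, lim_{λ→0⁺} l(λ) = ∞, where l(λ) = ∫₀^∞ ds/√(2(W(s+λ) − W(λ))). In particular ∫₀^∞ ds/√(2 W(s)) = ∞. -/

import Mathlib

open MeasureTheory Set Filter

/-- A convex function vanishing at `0` and nonnegative is monotone on `[0, ∞)`. -/
lemma blowup_aux_mono {W : ℝ → ℝ} (hWconv : ConvexOn ℝ Set.univ W)
    (hW0 : W 0 = 0) (hWnn : ∀ t, 0 ≤ W t) :
    ∀ x y : ℝ, 0 ≤ x → x ≤ y → W x ≤ W y := by
  intro x y hx hxy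
  rcases eq_or_lt_of_le hxy with rfl | hlt
  · exact le_rfl
  have hy : 0 < y := lt_of_le_of_lt hx hlt
  have h1 : 0 ≤ 1 - x / y := by
    have : x / y ≤ 1 := (div_le_one hy).mpr hxy
    linarith
  have h2 : 0 ≤ x / y := div_nonneg hx hy.le
  have key := hWconv.2 (Set.mem_univ (0:ℝ)) (Set.mem_univ y) h1 h2 (by ring)
  have hxe : (1 - x / y) • (0:ℝ) + (x / y) • y = x := by
    simp only [smul_eq_mul, mul_zero, zero_add]; exact div_mul_cancel₀ x hy.ne'
  rw [hxe] at key
  calc W x ≤ (1 - x / y) * W 0 + (x / y) * W y := key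
    _ = (x / y) * W y := by rw [hW0]; ring
    _ ≤ 1 * W y := by
        apply mul_le_mul_of_nonneg_right ((div_le_one hy).mpr hxy) (hWnn y)
    _ = W y := one_mul _

theorem blowup_length_tendsto_top
    (W : ℝ → ℝ) (hW : ContDiff ℝ 2 W) (hWnn : ∀ t, 0 ≤ W t)
    (hWconv : ConvexOn ℝ Set.univ W) (hWvan : ∀ t, W t = 0 ↔ t = 0)
    (hWint : IntegrableOn (fun u => 1 / Real.sqrt (W u)) {u : ℝ | 1 < u}) :
    Tendsto (fun lam => ∫ s in Ioi (0:ℝ), 1 / Real.sqrt (2 * (W (s + lam) - W lam)))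
      (nhdsWithin 0 (Ioi 0)) atTop ∧
    ¬ IntegrableOn (fun s => 1 / Real.sqrt (2 * W s)) (Ioi (0:ℝ)) := by
  have hW0 : W 0 = 0 := (hWvan 0).mpr rfl
  have hW1 : 0 < W 1 := lt_of_le_of_ne (hWnn 1) (fun h => one_ne_zero ((hWvan 1).mp h.symm))
  have hdW : Differentiable ℝ W := hW.differentiable (by norm_num)
  have hmono := blowup_aux_mono hWconv hW0 hWnn
  -- second derivative
  have hC1 : ContDiff ℝ 1 (deriv W) := by
    have h2 : ContDiff ℝ (1 + 1) W := by norm_num; exact hW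
    exact (contDiff_succ_iff_deriv.mp h2).2.2
  have hdW' : Differentiable ℝ (deriv W) := hC1.differentiable one_ne_zero
  have hcW'' : Continuous (deriv (deriv W)) := hC1.continuous_deriv le_rfl
  -- derivative vanishes at 0
  have hd0 : deriv W 0 = 0 := by
    have hmin : IsLocalMin W 0 :=
      Filter.Eventually.of_forall (fun t => by rw [hW0]; exact hWnn t)
    exact hmin.deriv_eq_zero
  -- quadratic upper bound near 0
  obtain ⟨C, hCpos, hCq⟩ : ∃ C : ℝ, 0 < C ∧ ∀ u ∈ Icc (0:ℝ) 2, W u ≤ C * u ^ 2 := by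
    obtain ⟨z, hz, hzmax⟩ := isCompact_Icc.exists_isMaxOn (Set.nonempty_Icc.mpr (by norm_num))
      (hcW''.continuousOn (s := Icc (0:ℝ) 2))
    set M : ℝ := max (deriv (deriv W) z) 1 with hM
    have hMpos : 0 < M := lt_of_lt_of_le one_pos (le_max_right _ _)
    have hbound : ∀ u ∈ Icc (0:ℝ) 2, deriv (deriv W) u ≤ M :=
      fun u hu => le_trans (hzmax hu) (le_max_left _ _)
    -- step 1 : deriv W u ≤ M * u on [0,2]
    have step1 : ∀ u ∈ Icc (0:ℝ) 2, deriv W u ≤ M * u := by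
      have hder : ∀ u : ℝ, deriv (fun v => M * v - deriv W v) u
          = M - deriv (deriv W) u := by
        intro u
        have h1 : HasDerivAt (fun v => M * v - deriv W v) (M * 1 - deriv (deriv W) u) u :=
          ((hasDerivAt_id u).const_mul M).sub (hdW' u).hasDerivAt
        simpa using h1.deriv
      have hmon : MonotoneOn (fun v => M * v - deriv W v) (Icc (0:ℝ) 2) := by
        apply monotoneOn_of_deriv_nonneg (convex_Icc _ _)
        · exact ((continuous_const.mul continuous_id).sub hC1.continuous).continuousOn
        · exact fun u _ => ((differentiable_id.const_mul M).sub hdW').differentiableAt.differentiableWithinAt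
        · intro u hu
          rw [interior_Icc] at hu
          rw [hder u]
          have := hbound u (Ioo_subset_Icc_self hu)
          linarith
      intro u hu
      have h0 : (0:ℝ) ∈ Icc (0:ℝ) 2 := by norm_num
      have h2 : M * 0 - deriv W 0 ≤ M * u - deriv W u := hmon h0 hu hu.1
      rw [hd0] at h2
      linarith
    refine ⟨M, hMpos, ?_⟩
    have hder2 : ∀ u : ℝ, deriv (fun v => M * v ^ 2 - W v) u = M * (2 * u) - deriv W u := by
      intro u
      have h1 : HasDerivAt (fun v => M * v ^ 2 - W v)
          (M * (↑2 * u ^ (2 - 1)) - deriv W u) u :=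
        ((hasDerivAt_pow 2 u).const_mul M).sub (hdW u).hasDerivAt
      simpa using h1.deriv
    have hmon2 : MonotoneOn (fun v => M * v ^ 2 - W v) (Icc (0:ℝ) 2) := by
      apply monotoneOn_of_deriv_nonneg (convex_Icc _ _)
      · exact ((continuous_const.mul (continuous_pow 2)).sub hW.continuous).continuousOn
      · exact fun u _ => (((differentiable_pow 2).const_mul M).sub hdW).differentiableAt.differentiableWithinAt
      · intro u hu
        rw [interior_Icc] at hu
        rw [hder2 u]
        have h1 := step1 u (Ioo_subset_Icc_self hu)
        have : M * u ≤ M * (2 * u) := by nlinarith [hu.1, hMpos]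
        linarith
    intro u hu
    have h0 : (0:ℝ) ∈ Icc (0:ℝ) 2 := by norm_num
    have h2 : M * 0 ^ 2 - W 0 ≤ M * u ^ 2 - W u := hmon2 h0 hu hu.1
    rw [hW0] at h2
    nlinarith
  -- positivity of the derivative on (0,∞)
  have hW'pos : ∀ lam : ℝ, 0 < lam → 0 < deriv W lam := by
    intro lam hlam
    have hsl := hWconv.slope_le_deriv (Set.mem_univ 0) (Set.mem_univ lam) hlam
      (hdW lam)
    have hWlam : 0 < W lam :=
      lt_of_le_of_ne (hWnn lam) (fun h => (ne_of_gt hlam) ((hWvan lam).mp h.symm))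
    have hslope : slope W 0 lam = W lam / lam := by
      rw [slope_def_field]; rw [hW0]; ring_nf
    rw [hslope] at hsl
    exact lt_of_lt_of_le (div_pos hWlam hlam) hsl
  -- lower bound for the increment
  have hincr : ∀ lam s : ℝ, 0 < lam → 0 < s →
      deriv W lam * s ≤ W (s + lam) - W lam := by
    intro lam s hlam hs
    have hsl := hWconv.deriv_le_slope (Set.mem_univ lam) (Set.mem_univ (s + lam))
      (by linarith) (hdW lam)
    have hslope : slope W lam (s + lam) = (W (s + lam) - W lam) / s := by
      rw [slope_def_field]; congr 1; ring
    rw [hslope] at hsl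
    calc deriv W lam * s ≤ ((W (s + lam) - W lam) / s) * s :=
          mul_le_mul_of_nonneg_right hsl hs.le
      _ = W (s + lam) - W lam := by field_simp
  have hpos : ∀ lam s : ℝ, 0 < lam → 0 < s → 0 < 2 * (W (s + lam) - W lam) := by
    intro lam s hlam hs
    have := hincr lam s hlam hs
    have := mul_pos (hW'pos lam hlam) hs
    linarith
  -- linear growth at infinity
  have hgrow : ∀ t : ℝ, 1 ≤ t → t * W 1 ≤ W t := by
    intro t ht
    rcases eq_or_lt_of_le ht with rfl | hlt
    · simp
    have := hWconv.slope_mono_adjacent (Set.mem_univ 0) (Set.mem_univ t)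
      (x := (0:ℝ)) (y := (1:ℝ)) (z := t) one_pos hlt
    rw [hW0] at this
    simp only [sub_zero, div_one] at this
    have ht1 : 0 < t - 1 := by linarith
    have h2 := (le_div_iff₀ ht1).mp this
    nlinarith [h2]
  -- measurability of the integrand
  have hmeas : ∀ lam : ℝ, Measurable
      (fun s => 1 / Real.sqrt (2 * (W (s + lam) - W lam))) := by
    intro lam
    simp only [one_div]
    exact ((Real.continuous_sqrt.comp
      (continuous_const.mul ((hW.continuous.comp (continuous_id.add continuous_const)).sub
        continuous_const))).measurable).inv
  -- integrability of the integrand on (0,∞), for 0 < lam ≤ 1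
  have hinteg : ∀ lam : ℝ, 0 < lam → lam ≤ 1 →
      IntegrableOn (fun s => 1 / Real.sqrt (2 * (W (s + lam) - W lam))) (Ioi (0:ℝ)) := by
    intro lam hlam hlam1
    have hsplit : Ioc (0:ℝ) 2 ∪ Ioi 2 = Ioi (0:ℝ) := Ioc_union_Ioi_eq_Ioi (by norm_num)
    rw [← hsplit]
    apply IntegrableOn.union
    · -- on (0,2] compare with c * s^(-1/2)
      have hc : (0:ℝ) < Real.sqrt (2 * deriv W lam) :=
        Real.sqrt_pos.mpr (by have := hW'pos lam hlam; linarith)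
      have hrint : IntegrableOn (fun s : ℝ => (Real.sqrt (2 * deriv W lam))⁻¹ * s ^ (-(1:ℝ)/2))
          (Ioc (0:ℝ) 2) := by
        apply Integrable.const_mul
        have := intervalIntegral.intervalIntegrable_rpow' (a := 0) (b := 2) (r := -(1:ℝ)/2) (by norm_num)
        rwa [intervalIntegrable_iff_integrableOn_Ioc_of_le (by norm_num)] at this
      apply Integrable.mono' hrint ((hmeas lam).aestronglyMeasurable)
      rw [ae_restrict_iff' measurableSet_Ioc]
      refine Filter.Eventually.of_forall (fun s hs => ?_)
      have hs0 : 0 < s := hs.1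
      have hge : 2 * (deriv W lam * s) ≤ 2 * (W (s + lam) - W lam) := by
        have := hincr lam s hlam hs0; linarith
      have hsq : Real.sqrt (2 * deriv W lam) * Real.sqrt s
          ≤ Real.sqrt (2 * (W (s + lam) - W lam)) := by
        rw [← Real.sqrt_mul (by have := hW'pos lam hlam; linarith) s]
        apply Real.sqrt_le_sqrt; linarith [hge]
      have hposden : 0 < Real.sqrt (2 * deriv W lam) * Real.sqrt s :=
        mul_pos hc (Real.sqrt_pos.mpr hs0)
      rw [Real.norm_eq_abs, abs_of_nonneg (by positivity)]
      calc 1 / Real.sqrt (2 * (W (s + lam) - W lam))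
          ≤ 1 / (Real.sqrt (2 * deriv W lam) * Real.sqrt s) :=
            one_div_le_one_div_of_le hposden hsq
        _ = (Real.sqrt (2 * deriv W lam))⁻¹ * s ^ (-(1:ℝ)/2) := by
            rw [one_div, mul_inv]
            congr 1
            rw [Real.sqrt_eq_rpow, ← Real.rpow_neg hs0.le]
            norm_num
    · -- on (2,∞) compare with 1/sqrt (W s)
      have hWint2 : IntegrableOn (fun u => 1 / Real.sqrt (W u)) (Ioi (2:ℝ)) :=
        hWint.mono_set (fun u hu => show 1 < u from lt_trans one_lt_two hu)
      apply Integrable.mono' hWint2 ((hmeas lam).aestronglyMeasurable)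
      rw [ae_restrict_iff' measurableSet_Ioi]
      refine Filter.Eventually.of_forall (fun s hs => ?_)
      have hs2 : (2:ℝ) < s := hs
      have hWs : 2 * W 1 ≤ W s := by
        have h1 := hgrow s (by linarith)
        nlinarith [h1, hW1, hs2]
      have hWlam1 : W lam ≤ W 1 := hmono lam 1 hlam.le hlam1
      have hWss : W s ≤ W (s + lam) := hmono s (s + lam) (by linarith) (by linarith)
      have hkey : W s ≤ 2 * (W (s + lam) - W lam) := by linarith
      have hWspos : 0 < W s := by linarith [hW1]
      rw [Real.norm_eq_abs, abs_of_nonneg (by positivity)]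
      apply one_div_le_one_div_of_le (Real.sqrt_pos.mpr hWspos)
      exact Real.sqrt_le_sqrt hkey
  -- the constant for the logarithmic lower bound
  have h8C : (0:ℝ) < Real.sqrt (8 * C) := Real.sqrt_pos.mpr (by linarith)
  set c0 : ℝ := (Real.sqrt (8 * C))⁻¹ with hc0
  have hc0pos : 0 < c0 := inv_pos.mpr h8C
  -- pointwise lower bound on (lam, 1]
  have hptwise : ∀ lam : ℝ, 0 < lam → lam < 1 → ∀ s ∈ Ioc lam 1,
      c0 * s⁻¹ ≤ 1 / Real.sqrt (2 * (W (s + lam) - W lam)) := by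
    intro lam hlam hlam1 s hs
    have hs0 : 0 < s := lt_trans hlam hs.1
    have hsl : lam < s := hs.1
    have hs1 : s ≤ 1 := hs.2
    have h2s : s + lam ∈ Icc (0:ℝ) 2 := ⟨by linarith, by linarith⟩
    have hWb : W (s + lam) ≤ C * (s + lam) ^ 2 := hCq _ h2s
    have hub : 2 * (W (s + lam) - W lam) ≤ 8 * C * s ^ 2 := by
      have hWlamnn := hWnn lam
      have hsq2 : (s + lam) ^ 2 ≤ 4 * s ^ 2 := by
        nlinarith [mul_pos hlam hs0, mul_lt_mul_of_pos_right hsl hs0,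
          mul_lt_mul_of_pos_left hsl hlam]
      have h3 := mul_le_mul_of_nonneg_left hsq2 hCpos.le
      linarith [hWb, h3]
    have hsq : Real.sqrt (2 * (W (s + lam) - W lam)) ≤ Real.sqrt (8 * C) * s := by
      have : Real.sqrt (8 * C * s ^ 2) = Real.sqrt (8 * C) * s := by
        rw [Real.sqrt_mul (by linarith) (s ^ 2), Real.sqrt_sq hs0.le]
      rw [← this]
      exact Real.sqrt_le_sqrt hub
    have hdenpos : 0 < Real.sqrt (2 * (W (s + lam) - W lam)) :=
      Real.sqrt_pos.mpr (hpos lam s hlam hs0)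
    have := one_div_le_one_div_of_le hdenpos hsq
    calc c0 * s⁻¹ = 1 / (Real.sqrt (8 * C) * s) := by
          rw [hc0, one_div, mul_inv]
      _ ≤ 1 / Real.sqrt (2 * (W (s + lam) - W lam)) := this
  -- integral lower bound
  have hlow : ∀ lam : ℝ, 0 < lam → lam < 1 →
      c0 * (-Real.log lam) ≤
        ∫ s in Ioi (0:ℝ), 1 / Real.sqrt (2 * (W (s + lam) - W lam)) := by
    intro lam hlam hlam1
    have hfi := hinteg lam hlam hlam1.le
    have hIoc : IntegrableOn (fun s => 1 / Real.sqrt (2 * (W (s + lam) - W lam)))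
        (Ioc lam 1) := hfi.mono_set (fun s hs => lt_trans hlam hs.1)
    have hinv : IntegrableOn (fun s : ℝ => c0 * s⁻¹) (Ioc lam 1) := by
      apply Integrable.const_mul
      have := intervalIntegral.intervalIntegrable_inv (μ := volume) (f := fun x : ℝ => x) (a := lam) (b := 1)
        (fun x hx => by
          rcases Set.mem_uIcc.mp hx with h | h
          · exact ne_of_gt (lt_of_lt_of_le hlam h.1)
          · exact ne_of_gt (lt_of_lt_of_le one_pos h.1)) continuousOn_id
      rwa [intervalIntegrable_iff_integrableOn_Ioc_of_le hlam1.le] at this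
    have step1 : ∫ s in Ioc lam 1, c0 * s⁻¹
        ≤ ∫ s in Ioc lam 1, 1 / Real.sqrt (2 * (W (s + lam) - W lam)) :=
      setIntegral_mono_on hinv hIoc measurableSet_Ioc (hptwise lam hlam hlam1)
    have step2 : ∫ s in Ioc lam 1, 1 / Real.sqrt (2 * (W (s + lam) - W lam))
        ≤ ∫ s in Ioi (0:ℝ), 1 / Real.sqrt (2 * (W (s + lam) - W lam)) := by
      apply setIntegral_mono_set hfi
      · exact Filter.Eventually.of_forall (fun s => by positivity)
      · exact Filter.Eventually.of_forall (fun s hs => lt_trans hlam hs.1)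
    have hval : ∫ s in Ioc lam 1, c0 * s⁻¹ = c0 * (-Real.log lam) := by
      rw [MeasureTheory.integral_const_mul]
      congr 1
      rw [← intervalIntegral.integral_of_le hlam1.le,
        integral_inv_of_pos hlam one_pos]
      rw [← Real.log_inv]
      congr 1
      field_simp
    linarith [step1, step2, hval.ge, hval.le]
  constructor
  · -- part 1
    apply tendsto_atTop_mono' (nhdsWithin 0 (Ioi 0))
      (f₁ := fun lam => c0 * (-Real.log lam))
    · filter_upwards [Ioo_mem_nhdsGT_of_mem
        (show (0:ℝ) ∈ Ico (0:ℝ) 1 by constructor <;> norm_num)] with lam hlam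
      exact hlow lam hlam.1 hlam.2
    · apply Tendsto.const_mul_atTop hc0pos
      exact tendsto_neg_atBot_atTop.comp Real.tendsto_log_nhdsGT_zero
  · -- part 2
    intro hInt
    have hIoo : IntegrableOn (fun s => 1 / Real.sqrt (2 * W s)) (Ioo (0:ℝ) 1) :=
      hInt.mono_set (fun s hs => hs.1)
    have h2C : (0:ℝ) < Real.sqrt (2 * C) := Real.sqrt_pos.mpr (by linarith)
    have haux : IntegrableOn (fun s : ℝ => (Real.sqrt (2 * C))⁻¹ * s⁻¹) (Ioo (0:ℝ) 1) := by
      apply Integrable.mono' hIoo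
      · exact ((measurable_inv.const_mul _).aestronglyMeasurable)
      · rw [ae_restrict_iff' measurableSet_Ioo]
        refine Filter.Eventually.of_forall (fun s hs => ?_)
        have hs0 : 0 < s := hs.1
        have hs1 : s < 1 := hs.2
        have hWb : W s ≤ C * s ^ 2 := hCq s ⟨hs0.le, by linarith⟩
        have hWspos : 0 < W s :=
          lt_of_le_of_ne (hWnn s) (fun h => (ne_of_gt hs0) ((hWvan s).mp h.symm))
        have hsq : Real.sqrt (2 * W s) ≤ Real.sqrt (2 * C) * s := by
          have heq : Real.sqrt (2 * C * s ^ 2) = Real.sqrt (2 * C) * s := by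
            rw [Real.sqrt_mul (by linarith) (s ^ 2), Real.sqrt_sq hs0.le]
          rw [← heq]
          apply Real.sqrt_le_sqrt; nlinarith
        rw [Real.norm_eq_abs, abs_of_nonneg (by positivity)]
        calc (Real.sqrt (2 * C))⁻¹ * s⁻¹ = 1 / (Real.sqrt (2 * C) * s) := by
              rw [one_div, mul_inv]
          _ ≤ 1 / Real.sqrt (2 * W s) :=
              one_div_le_one_div_of_le (Real.sqrt_pos.mpr (by linarith)) hsq
    have hinv : IntegrableOn (fun s : ℝ => s⁻¹) (Ioo (0:ℝ) 1) := by
      have h2 : IntegrableOn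
          (fun s : ℝ => Real.sqrt (2 * C) * ((Real.sqrt (2 * C))⁻¹ * s⁻¹)) (Ioo (0:ℝ) 1) :=
        haux.const_mul (Real.sqrt (2 * C))
      exact h2.congr_fun (fun s _ => by
        show Real.sqrt (2 * C) * ((Real.sqrt (2 * C))⁻¹ * s⁻¹) = s⁻¹
        rw [← mul_assoc, mul_inv_cancel₀ h2C.ne', one_mul]) measurableSet_Ioo
    have hrpow : IntegrableOn (fun s : ℝ => s ^ (-1:ℝ)) (Ioo (0:ℝ) 1) :=
      hinv.congr_fun (fun s _ => (Real.rpow_neg_one s).symm) measurableSet_Ioo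
    have := (intervalIntegral.integrableOn_Ioo_rpow_iff one_pos).mp hrpow
    linarith
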